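/- Let D be a family of d-variate quasi-copulas with the property that for every d-variate quasi-copula Q and every two points x, z ∈ [0,1]^d there exists D_{x,z} ∈ D with D_{x,z}(x) = Q(x) and D_{x,z}(z) = Q(z). Then for every quasi-copula Q and every u ∈ [0,1]^d, Q(u) = inf over z of (sup over x of D_{x,z}(u)) and Q(u) = sup over z of (inf over x of D_{x,z}(u)). -/
import Mathlib


/-- A `d`-variate quasi-copula. -/
def IsQuasiCopula (d : ℕ) (Q : (Fin d → ℝ) → ℝ) : Prop :=
  (∀ j : Fin d, ∀ u ∈ Set.Icc (0:ℝ) 1,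
      Q (Function.update (fun _ => (1:ℝ)) j u) = u) ∧
  (∀ j : Fin d, ∀ x : Fin d → ℝ, (∀ i, x i ∈ Set.Icc (0:ℝ) 1) →
      ∀ a b : ℝ, a ∈ Set.Icc (0:ℝ) 1 → b ∈ Set.Icc (0:ℝ) 1 → a ≤ b →
        Q (Function.update x j a) ≤ Q (Function.update x j b)) ∧
  (∀ j : Fin d, ∀ x : Fin d → ℝ, (∀ i, x i ∈ Set.Icc (0:ℝ) 1) →
      ∀ a b : ℝ, a ∈ Set.Icc (0:ℝ) 1 → b ∈ Set.Icc (0:ℝ) 1 →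
        |Q (Function.update x j a) - Q (Function.update x j b)| ≤ |a - b|)

lemma qc_bounds (d : ℕ) (hd : 0 < d) (Q : (Fin d → ℝ) → ℝ) (hQ : IsQuasiCopula d Q)
    (u : Fin d → ℝ) (hu : ∀ i, u i ∈ Set.Icc (0:ℝ) 1) :
    1 - (d : ℝ) ≤ Q u ∧ Q u ≤ 1 := by
  obtain ⟨h1, hmono, hlip⟩ := hQ
  have hones : Q (fun _ => (1:ℝ)) = 1 := by
    have := h1 ⟨0, hd⟩ 1 (by norm_num)
    have e : Function.update (fun _ : Fin d => (1:ℝ)) ⟨0, hd⟩ 1 = fun _ => (1:ℝ) := by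
      funext i; by_cases h : i = (⟨0, hd⟩ : Fin d) <;> simp [h]
    rwa [e] at this
  -- upper bound
  have hupper : ∀ s : Finset (Fin d), Q (fun i => if i ∈ s then u i else 1) ≤ 1 := by
    intro s
    induction s using Finset.induction with
    | empty => simp [hones]
    | @insert j s hj ih =>
      set x : Fin d → ℝ := fun i => if i ∈ s then u i else 1 with hx
      have hxc : ∀ i, x i ∈ Set.Icc (0:ℝ) 1 := by
        intro i; by_cases h : i ∈ s <;> simp [hx, h, hu i]
      have hxj : x j = 1 := by simp [hx, hj]
      have key := hmono j x hxc (u j) 1 (hu j) (by norm_num) (hu j).2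
      rw [show Function.update x j 1 = x by rw [← hxj]; exact Function.update_eq_self _ _] at key
      have heq : Function.update x j (u j) = fun i => if i ∈ insert j s then u i else 1 := by
        funext i
        by_cases h : i = j
        · subst h; simp [Function.update_self]
        · simp [Function.update_of_ne h, hx, h]
      rw [heq] at key
      exact key.trans ih
  have hup : Q u ≤ 1 := by
    have := hupper Finset.univ
    simpa using this
  -- Q u ≥ Q (zeros)
  have hlow1 : ∀ s : Finset (Fin d), Q (fun i => if i ∈ s then 0 else u i) ≤ Q u := by
    intro s
    induction s using Finset.induction with
    | empty => simp
    | @insert j s hj ih =>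
      set x : Fin d → ℝ := fun i => if i ∈ s then 0 else u i with hx
      have hxc : ∀ i, x i ∈ Set.Icc (0:ℝ) 1 := by
        intro i; by_cases h : i ∈ s <;> simp [hx, h, hu i]
      have hxj : x j = u j := by simp [hx, hj]
      have key := hmono j x hxc 0 (u j) (by norm_num) (hu j) (hu j).1
      rw [show Function.update x j (u j) = x by rw [← hxj]; exact Function.update_eq_self _ _]
        at key
      have heq : Function.update x j 0 = fun i => if i ∈ insert j s then 0 else u i := by
        funext i
        by_cases h : i = j
        · subst h; simp [Function.update_self]
        · simp [Function.update_of_ne h, hx, h]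
      rw [heq] at key
      exact key.trans ih
  -- Q (zeros) ≥ 1 - card
  have hlow2 : ∀ s : Finset (Fin d),
      1 - (s.card : ℝ) ≤ Q (fun i => if i ∈ s then 0 else 1) := by
    intro s
    induction s using Finset.induction with
    | empty => simp [hones]
    | @insert j s hj ih =>
      set x : Fin d → ℝ := fun i => if i ∈ s then 0 else 1 with hx
      have hxc : ∀ i, x i ∈ Set.Icc (0:ℝ) 1 := by
        intro i; by_cases h : i ∈ s <;> simp [hx, h]
      have hxj : x j = 1 := by simp [hx, hj]
      have key := hlip j x hxc 0 1 (by norm_num) (by norm_num)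
      rw [show Function.update x j 1 = x by rw [← hxj]; exact Function.update_eq_self _ _] at key
      have heq : Function.update x j 0 = fun i => if i ∈ insert j s then 0 else 1 := by
        funext i
        by_cases h : i = j
        · subst h; simp [Function.update_self]
        · simp [Function.update_of_ne h, hx, h]
      rw [heq] at key
      have habs : Q x - 1 ≤ Q (fun i => if i ∈ insert j s then 0 else 1) := by
        have := abs_le.mp key
        simp only [zero_sub, abs_neg, abs_one] at this
        linarith [this.1]
      rw [Finset.card_insert_of_notMem hj]
      push_cast
      linarith
  have hlo : 1 - (d : ℝ) ≤ Q u := by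
    have h2 := hlow2 Finset.univ
    have h1' := hlow1 Finset.univ
    simp only [Finset.mem_univ, if_true, Finset.card_univ, Fintype.card_fin] at h2 h1'
    linarith
  exact ⟨hlo, hup⟩

/-- if a family `D` of quasi-copulas interpolates any quasi-copula at any
two points, then every quasi-copula is a pointwise inf of sups (and sup of infs) of the
interpolating members of `D`. -/
theorem quasiCopula_inf_sup_of_two_point_family (d : ℕ) (hd : 0 < d)
    (D : Set ((Fin d → ℝ) → ℝ)) (hD : ∀ C ∈ D, IsQuasiCopula d C)
    (Q : (Fin d → ℝ) → ℝ) (hQ : IsQuasiCopula d Q)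
    (Dsel : (Fin d → ℝ) → (Fin d → ℝ) → ((Fin d → ℝ) → ℝ))
    (hmem : ∀ x z : Fin d → ℝ, (∀ i, x i ∈ Set.Icc (0:ℝ) 1) →
      (∀ i, z i ∈ Set.Icc (0:ℝ) 1) → Dsel x z ∈ D)
    (hagree : ∀ x z : Fin d → ℝ, (∀ i, x i ∈ Set.Icc (0:ℝ) 1) →
      (∀ i, z i ∈ Set.Icc (0:ℝ) 1) → Dsel x z x = Q x ∧ Dsel x z z = Q z) :
    ∀ u : Fin d → ℝ, (∀ i, u i ∈ Set.Icc (0:ℝ) 1) →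
      (Q u = ⨅ z : {z : Fin d → ℝ // ∀ i, z i ∈ Set.Icc (0:ℝ) 1},
               ⨆ x : {x : Fin d → ℝ // ∀ i, x i ∈ Set.Icc (0:ℝ) 1}, Dsel x.1 z.1 u) ∧
      (Q u = ⨆ z : {z : Fin d → ℝ // ∀ i, z i ∈ Set.Icc (0:ℝ) 1},
               ⨅ x : {x : Fin d → ℝ // ∀ i, x i ∈ Set.Icc (0:ℝ) 1}, Dsel x.1 z.1 u) := by
  intro u hu
  haveI : Nonempty {x : Fin d → ℝ // ∀ i, x i ∈ Set.Icc (0:ℝ) 1} := ⟨⟨u, hu⟩⟩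
  have hb : ∀ x z : Fin d → ℝ, (∀ i, x i ∈ Set.Icc (0:ℝ) 1) →
      (∀ i, z i ∈ Set.Icc (0:ℝ) 1) → 1 - (d:ℝ) ≤ Dsel x z u ∧ Dsel x z u ≤ 1 := by
    intro x z hx hz
    exact qc_bounds d hd _ (hD _ (hmem x z hx hz)) u hu
  set T := {x : Fin d → ℝ // ∀ i, x i ∈ Set.Icc (0:ℝ) 1}
  have hbddA : ∀ z : T, BddAbove (Set.range fun x : T => Dsel x.1 z.1 u) :=
    fun z => ⟨1, by rintro _ ⟨x, rfl⟩; exact (hb x.1 z.1 x.2 z.2).2⟩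
  have hbddB : ∀ z : T, BddBelow (Set.range fun x : T => Dsel x.1 z.1 u) :=
    fun z => ⟨1 - (d:ℝ), by rintro _ ⟨x, rfl⟩; exact (hb x.1 z.1 x.2 z.2).1⟩
  constructor
  · have hge : ∀ z : T, Q u ≤ ⨆ x : T, Dsel x.1 z.1 u := by
      intro z
      have := le_ciSup (hbddA z) (⟨u, hu⟩ : T)
      rwa [(hagree u z.1 hu z.2).1] at this
    have hle : (⨆ x : T, Dsel x.1 (⟨u, hu⟩ : T).1 u) ≤ Q u := by
      apply ciSup_le
      intro x
      exact le_of_eq (hagree x.1 u x.2 hu).2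
    refine le_antisymm (le_ciInf hge) ?_
    calc (⨅ z : T, ⨆ x : T, Dsel x.1 z.1 u) ≤ ⨆ x : T, Dsel x.1 (⟨u, hu⟩ : T).1 u :=
          ciInf_le ⟨Q u, by rintro _ ⟨z, rfl⟩; exact hge z⟩ _
      _ ≤ Q u := hle
  · have hle : ∀ z : T, (⨅ x : T, Dsel x.1 z.1 u) ≤ Q u := by
      intro z
      have := ciInf_le (hbddB z) (⟨u, hu⟩ : T)
      rwa [(hagree u z.1 hu z.2).1] at this
    have hge : Q u ≤ ⨅ x : T, Dsel x.1 (⟨u, hu⟩ : T).1 u := by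
      apply le_ciInf
      intro x
      exact ge_of_eq (hagree x.1 u x.2 hu).2
    refine le_antisymm ?_ (ciSup_le hle)
    calc Q u ≤ ⨅ x : T, Dsel x.1 (⟨u, hu⟩ : T).1 u := hge
      _ ≤ ⨆ z : T, ⨅ x : T, Dsel x.1 z.1 u :=
          le_ciSup (f := fun z : T => ⨅ x : T, Dsel x.1 z.1 u)
            ⟨Q u, by rintro _ ⟨z, rfl⟩; exact hle z⟩ ⟨u, hu⟩
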